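/- Let A be a real square matrix whose off-diagonal entries are all non-positive. Then the following are equivalent: (1) there exists a vector v with all entries strictly positive such that Av has all entries strictly positive; (2) every real eigenvalue of A is positive. -/

import Mathlib

open Matrix

private lemma core_ineq (r : ℕ) (A : Matrix (Fin r) (Fin r) ℝ)
    (hoff : ∀ i j, i ≠ j → A i j ≤ 0) (v x : Fin r → ℝ)
    (k : Fin r) (hk : ∀ i, x i * v k ≤ x k * v i) :
    x k * A.mulVec v k ≤ A.mulVec x k * v k := by
  simp only [mulVec, dotProduct]
  rw [Finset.mul_sum, Finset.sum_mul]
  apply Finset.sum_le_sum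
  intro j _
  rcases eq_or_ne j k with rfl | hj
  · ring_nf; exact le_refl _
  · have ha : A k j ≤ 0 := hoff k j (Ne.symm hj)
    nlinarith [hk j, mul_le_mul_of_nonpos_left (hk j) ha]

/-- If v > 0 and Mv > 0 for a Z-matrix M, then My ≥ 0 implies y ≥ 0. -/
private lemma nonneg_of_mulVec_nonneg (r : ℕ) (A : Matrix (Fin r) (Fin r) ℝ)
    (hoff : ∀ i j, i ≠ j → A i j ≤ 0) (v : Fin r → ℝ) (hv : ∀ i, 0 < v i)
    (hAv : ∀ i, 0 < A.mulVec v i) (y : Fin r → ℝ)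
    (hy : ∀ i, 0 ≤ A.mulVec y i) : ∀ i, 0 ≤ y i := by
  intro i
  set x : Fin r → ℝ := -y with hx
  obtain ⟨k, -, hk⟩ := Finset.exists_max_image Finset.univ (fun i => x i / v i)
    ⟨i, Finset.mem_univ i⟩
  have hk' : ∀ j, x j * v k ≤ x k * v j := by
    intro j
    have := hk j (Finset.mem_univ j)
    rwa [div_le_div_iff₀ (hv j) (hv k)] at this
  rcases le_or_gt (x k) 0 with h0 | h0
  · have hxi : x i ≤ 0 := by
      nlinarith [hk' i, hv k, hv i, mul_nonpos_of_nonpos_of_nonneg h0 (hv i).le]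
    simp only [hx, Pi.neg_apply] at hxi
    linarith
  · exfalso
    have hcore := core_ineq r A hoff v x k hk'
    have h1 : A.mulVec x k = -(A.mulVec y k) := by rw [hx, mulVec_neg]; rfl
    have h2 : 0 ≤ A.mulVec y k := hy k
    nlinarith [hAv k, hv k]

private lemma mulVec_add_smul_one (r : ℕ) (A : Matrix (Fin r) (Fin r) ℝ)
    (t : ℝ) (v : Fin r → ℝ) (i : Fin r) :
    (A + t • (1 : Matrix (Fin r) (Fin r) ℝ)).mulVec v i = A.mulVec v i + t * v i := by
  rw [add_mulVec, smul_mulVec, one_mulVec]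
  simp

theorem stmt7 (r : ℕ) (A : Matrix (Fin r) (Fin r) ℝ)
    (hoff : ∀ i j, i ≠ j → A i j ≤ 0) :
    (∃ v : Fin r → ℝ, (∀ i, 0 < v i) ∧ (∀ i, 0 < A.mulVec v i)) ↔
      (∀ μ : ℝ, μ ∈ spectrum ℝ A → 0 < μ) := by
  constructor
  · rintro ⟨v, hv, hAv⟩ μ hμ
    rw [spectrum.mem_iff] at hμ
    have hdet : ((algebraMap ℝ (Matrix (Fin r) (Fin r) ℝ)) μ - A).det = 0 := by
      by_contra hne
      exact hμ ((isUnit_iff_isUnit_det _).mpr (isUnit_iff_ne_zero.mpr hne))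
    obtain ⟨x, hx0, hx⟩ := (Matrix.exists_mulVec_eq_zero_iff).mpr hdet
    -- A *ᵥ x = μ • x
    have heig : A.mulVec x = μ • x := by
      have := hx
      rw [sub_mulVec] at this
      have h1 : (algebraMap ℝ (Matrix (Fin r) (Fin r) ℝ)) μ = μ • 1 := by
        rw [Algebra.algebraMap_eq_smul_one]
      rw [h1, smul_mulVec, one_mulVec] at this
      have := sub_eq_zero.mp this
      exact this.symm
    -- find index with x k > 0 (for x or -x)
    have key : ∀ z : Fin r → ℝ, (∃ i, 0 < z i) → A.mulVec z = μ • z → 0 < μ := by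
      rintro z ⟨i, hi⟩ hz
      obtain ⟨k, -, hk⟩ := Finset.exists_max_image Finset.univ (fun i => z i / v i)
        ⟨i, Finset.mem_univ i⟩
      have hk' : ∀ j, z j * v k ≤ z k * v j := by
        intro j
        have := hk j (Finset.mem_univ j)
        rwa [div_le_div_iff₀ (hv j) (hv k)] at this
      have hzk : 0 < z k := by
        have h2 : 0 < z i / v i := div_pos hi (hv i)
        have h3 : 0 < z k / v k := lt_of_lt_of_le h2 (hk i (Finset.mem_univ i))
        have h5 := mul_pos h3 (hv k)
        rwa [div_mul_cancel₀ _ (hv k).ne'] at h5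
      have hcore := core_ineq r A hoff v z k hk'
      have h4 : A.mulVec z k = μ * z k := by rw [hz]; rfl
      rw [h4] at hcore
      nlinarith [hAv k, hv k, mul_pos hzk (hAv k), mul_pos hzk (hv k)]
    rcases (by
      by_contra hno
      push_neg at hno
      obtain ⟨hnp⟩ : ∃ _ : True, True := ⟨trivial, trivial⟩
      -- every z i ≤ 0 and every (-z) i ≤ 0 would force x = 0
      exact hx0 (funext fun i => le_antisymm (hno.1 i) (by
        have := hno.2 i
        simpa using this)) : (∃ i, 0 < x i) ∨ (∃ i, 0 < (-x) i)) with h | h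
    · exact key x h heig
    · refine key (-x) h ?_
      rw [mulVec_neg, heig]; ext i; simp
  · intro hspec
    by_contra h0
    -- the set S of shifts t  with a positive witness
    set S : Set ℝ := {t | ∃ v : Fin r → ℝ, (∀ i, 0 < v i) ∧
      ∀ i, 0 < A.mulVec v i + t * v i} with hS
    have h0S : (0 : ℝ) ∉ S := by
      intro ⟨v, hv, hAv⟩
      exact h0 ⟨v, hv, fun i => by simpa using hAv i⟩
    -- r > 0
    have hne : Nonempty (Fin r) := by
      rcases Nat.eq_zero_or_pos r with hr | hr
      · exfalso; subst hr
        exact h0 ⟨fun _ => 1, fun i => i.elim0, fun i => i.elim0⟩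
      · exact ⟨⟨0, hr⟩⟩
    -- S is upward closed
    have hup : ∀ s ∈ S, ∀ t, s ≤ t → t ∈ S := by
      rintro s ⟨v, hv, hAv⟩ t hst
      refine ⟨v, hv, fun i => ?_⟩
      have := hAv i
      nlinarith [hv i]
    -- big t is in S ∩ Ici 0
    set T : Set ℝ := S ∩ Set.Ici 0 with hT
    have hTne : T.Nonempty := by
      set c : ℝ := 1 + ∑ i, ∑ j, |A i j| with hc
      have hc0 : 0 ≤ c := by positivity
      refine ⟨c, ⟨fun _ => 1, fun _ => one_pos, fun i => ?_⟩, hc0⟩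
      have h1 : A.mulVec (fun _ => 1) i = ∑ j, A i j := by
        simp [mulVec, dotProduct]
      rw [h1]
      have h2 : -(∑ j, |A i j|) ≤ ∑ j, A i j := by
        rw [← Finset.sum_neg_distrib]
        exact Finset.sum_le_sum fun j _ => neg_abs_le _
      have h3 : ∑ j, |A i j| ≤ ∑ i, ∑ j, |A i j| :=
        Finset.single_le_sum (f := fun i => ∑ j, |A i j|)
          (fun i _ => Finset.sum_nonneg fun j _ => abs_nonneg _) (Finset.mem_univ i)
      simp only [mul_one]
      linarith
    have hbdd : BddBelow T := ⟨0, fun t ht => ht.2⟩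
    set t₀ : ℝ := sInf T with ht₀
    have ht₀0 : 0 ≤ t₀ := le_csInf hTne fun t ht => ht.2
    -- every t > t₀ is in S
    have hgt : ∀ t, t₀ < t → t ∈ S := by
      intro t ht
      obtain ⟨s, hsT, hst⟩ := exists_lt_of_csInf_lt hTne ht
      exact hup s hsT.1 t hst.le
    -- t₀ ∉ S
    have ht₀S : t₀ ∉ S := by
      rintro ⟨v, hv, hAv⟩
      rcases eq_or_lt_of_le ht₀0 with h | h
      · exact h0S (h ▸ (⟨v, hv, hAv⟩ : t₀ ∈ S))
      · set ε : ℝ := Finset.univ.inf' (Finset.univ_nonempty) (fun i => (A.mulVec v i + t₀ * v i) / v i) with hε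
        have hεpos : 0 < ε := by
          rw [hε]
          apply Finset.lt_inf'_iff .. |>.mpr
          intro i _
          exact div_pos (hAv i) (hv i)
        have hεle : ∀ i, ε ≤ (A.mulVec v i + t₀ * v i) / v i := fun i =>
          Finset.inf'_le _ (Finset.mem_univ i)
        set t' : ℝ := max 0 (t₀ - ε / 2) with ht'
        have ht'lt : t' < t₀ := by
          apply max_lt h; linarith
        have ht'T : t' ∈ T := by
          refine ⟨⟨v, hv, fun i => ?_⟩, Set.mem_Ici.mpr (le_max_left _ _)⟩
          have h1 := hεle i
          have h2 : ε * v i ≤ A.mulVec v i + t₀ * v i := (le_div_iff₀ (hv i)).mp h1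
          have h3 : t₀ - ε / 2 ≤ t' := le_max_right _ _
          nlinarith [hv i, hAv i]
        exact absurd (csInf_le hbdd ht'T) (not_le.mpr ht'lt)
    -- matrices A + t•1 for t ∈ S are Z-matrices and invertible with nonneg inverse
    have hZ : ∀ t : ℝ, ∀ i j, i ≠ j →
        (A + t • (1 : Matrix (Fin r) (Fin r) ℝ)) i j ≤ 0 := by
      intro t i j hij
      simp only [Matrix.add_apply, Matrix.smul_apply, Matrix.one_apply_ne hij, smul_zero,
        add_zero]
      exact hoff i j hij
    have hdet : ∀ t ∈ S, (A + t • (1 : Matrix (Fin r) (Fin r) ℝ)).det ≠ 0 := by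
      rintro t ⟨v, hv, hAv⟩ hdet0
      obtain ⟨x, hx0, hx⟩ := Matrix.exists_mulVec_eq_zero_iff.mpr hdet0
      have hAv' : ∀ i, 0 < (A + t • (1 : Matrix (Fin r) (Fin r) ℝ)).mulVec v i := by
        intro i; rw [mulVec_add_smul_one]; exact hAv i
      have h1 : ∀ i, 0 ≤ x i := by
        apply nonneg_of_mulVec_nonneg r _ (hZ t) v hv hAv'
        intro i; rw [hx]; exact le_refl 0
      have h2 := nonneg_of_mulVec_nonneg r _ (hZ t) v hv hAv' (-x)
        (by intro i; rw [mulVec_neg, hx]; simp)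
      refine hx0 (funext fun i => ?_)
      have h2i := h2 i
      simp only [Pi.neg_apply] at h2i
      have h1i := h1 i
      show x i = (0 : Fin r → ℝ) i
      simp only [Pi.zero_apply]
      linarith
    have hinv : ∀ t ∈ S, ∀ i j, 0 ≤ (A + t • (1 : Matrix (Fin r) (Fin r) ℝ))⁻¹ i j := by
      rintro t htS i j
      obtain ⟨v, hv, hAv⟩ := htS
      set M := A + t • (1 : Matrix (Fin r) (Fin r) ℝ) with hM
      have hAv' : ∀ i, 0 < M.mulVec v i := by
        intro i; rw [hM, mulVec_add_smul_one]; exact hAv i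
      have hMdet : IsUnit M.det := isUnit_iff_ne_zero.mpr (hdet t ⟨v, hv, hAv⟩)
      have hy : M.mulVec (M⁻¹.mulVec (Pi.single j 1)) = Pi.single j 1 := by
        rw [mulVec_mulVec, Matrix.mul_nonsing_inv M hMdet, one_mulVec]
      have := nonneg_of_mulVec_nonneg r M (hZ t) v hv hAv'
        (M⁻¹.mulVec (Pi.single j 1)) (by
          intro i; rw [hy]
          by_cases h : i = j
          · subst h; simp
          · simp [Pi.single_eq_of_ne h]) i
      simpa [mulVec_single] using this
    -- Now show A + t₀ • 1 is singular
    set M₀ := A + t₀ • (1 : Matrix (Fin r) (Fin r) ℝ) with hM₀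
    have hM₀det : M₀.det = 0 := by
      by_contra hd
      -- inverse entries are limits of nonneg entries
      have hcont : ∀ i j, ContinuousAt
          (fun t : ℝ => (A + t • (1 : Matrix (Fin r) (Fin r) ℝ))⁻¹ i j) t₀ := by
        intro i j
        have hmat : Continuous (fun t : ℝ => A + t • (1 : Matrix (Fin r) (Fin r) ℝ)) :=
          continuous_const.add (continuous_id.smul continuous_const)
        have hdetc : Continuous (fun t : ℝ => (A + t • (1 : Matrix (Fin r) (Fin r) ℝ)).det) :=
          hmat.matrix_det
        have hadjc : Continuous (fun t : ℝ =>
            (A + t • (1 : Matrix (Fin r) (Fin r) ℝ)).adjugate i j) :=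
          (continuous_apply j).comp ((continuous_apply i).comp hmat.matrix_adjugate)
        have heq : (fun t : ℝ => (A + t • (1 : Matrix (Fin r) (Fin r) ℝ))⁻¹ i j) =
            fun t : ℝ => ((A + t • (1 : Matrix (Fin r) (Fin r) ℝ)).det)⁻¹ *
              (A + t • (1 : Matrix (Fin r) (Fin r) ℝ)).adjugate i j := by
          funext t
          rw [Matrix.inv_def, Matrix.smul_apply, smul_eq_mul, Ring.inverse_eq_inv']
        rw [heq]
        exact (hdetc.continuousAt.inv₀ hd).mul hadjc.continuousAt
      have hinv₀ : ∀ i j, 0 ≤ M₀⁻¹ i j := by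
        intro i j
        have htend : Filter.Tendsto
            (fun t : ℝ => (A + t • (1 : Matrix (Fin r) (Fin r) ℝ))⁻¹ i j)
            (nhdsWithin t₀ (Set.Ioi t₀)) (nhds (M₀⁻¹ i j)) :=
          ((hcont i j).tendsto).mono_left nhdsWithin_le_nhds
        refine ge_of_tendsto htend ?_
        filter_upwards [self_mem_nhdsWithin] with t ht
        exact hinv t (hgt t ht) i j
      -- construct positive vector
      have hMdet : IsUnit M₀.det := isUnit_iff_ne_zero.mpr hd
      set u : Fin r → ℝ := M₀⁻¹.mulVec (fun _ => 1) with hu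
      have hMu : M₀.mulVec u = fun _ => 1 := by
        rw [hu, mulVec_mulVec, Matrix.mul_nonsing_inv M₀ hMdet, one_mulVec]
      have hu0 : ∀ i, 0 ≤ u i := by
        intro i
        rw [hu]
        simp only [mulVec, dotProduct, mul_one]
        exact Finset.sum_nonneg fun j _ => hinv₀ i j
      have hupos : ∀ i, 0 < u i := by
        intro i
        have h1 : M₀.mulVec u i = 1 := by rw [hMu]
        have h2 : M₀.mulVec u i = M₀ i i * u i + ∑ j ∈ Finset.univ.erase i, M₀ i j * u j := by
          simp only [mulVec, dotProduct]
          rw [← Finset.add_sum_erase _ _ (Finset.mem_univ i)]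
        have h3 : ∑ j ∈ Finset.univ.erase i, M₀ i j * u j ≤ 0 :=
          Finset.sum_nonpos fun j hj =>
            mul_nonpos_of_nonpos_of_nonneg
              (hZ t₀ i j (Ne.symm (Finset.mem_erase.mp hj).1)) (hu0 j)
        have h4 : 1 ≤ M₀ i i * u i := by rw [h1] at h2; linarith
        rcases (hu0 i).lt_or_eq with h | h
        · exact h
        · exfalso; rw [← h] at h4; simp at h4; linarith
      exact ht₀S ⟨u, hupos, fun i => by
        have : M₀.mulVec u i = 1 := by rw [hMu]
        rw [hM₀, mulVec_add_smul_one] at this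
        rw [this]
        exact one_pos⟩
    -- so -t₀ is a real eigenvalue, contradiction with positivity
    have hmem : (-t₀) ∈ spectrum ℝ A := by
      rw [spectrum.mem_iff]
      intro hunit
      have heq : (algebraMap ℝ (Matrix (Fin r) (Fin r) ℝ)) (-t₀) - A = -M₀ := by
        rw [Algebra.algebraMap_eq_smul_one, hM₀]
        module
      rw [heq, IsUnit.neg_iff, isUnit_iff_isUnit_det, isUnit_iff_ne_zero] at hunit
      exact hunit hM₀det
    linarith [hspec (-t₀) hmem]
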